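/- The syntactic morphism theorem for synchronous algebras: for every binary relation R ⊆ Σ* × Σ*, there exists a surjective synchronous algebra morphism η_R: Sync(Σ) ↠ A_R recognizing R such that for any surjective morphism φ: Sync(Σ) ↠ B recognizing R, there exists a surjective morphism ψ: B ↠ A_R with ψ ∘ φ = η_R; moreover, A_R is unique up to isomorphism. -/

import Mathlib

/-- Letter-types: `l` for a pair of proper letters, `p` for (letter, padding),
`q` for (padding, letter). -/
inductive LTy | l | p | q
deriving DecidableEq

/-- The five types of (well-formed) synchronous words:
`ll`, `ll→lb` (= `lllb`), `lb`, `ll→bl` (= `llbl`), `bl`. -/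
inductive STy | ll | lllb | lb | llbl | bl
deriving DecidableEq

namespace STy

/-- Letter-type of the first letter. -/
def src : STy → LTy
  | ll => .l | lllb => .l | lb => .p | llbl => .l | bl => .q

/-- Letter-type of the last letter. -/
def tgt : STy → LTy
  | ll => .l | lllb => .p | lb => .p | llbl => .q | bl => .q

/-- `σ = α→β` is compatible with `τ = β'→γ` iff `β = β'` or `β = ll`. -/
def compat (σ τ : STy) : Prop := σ.tgt = τ.src ∨ σ.tgt = LTy.l

/-- Product of compatible types (junk on incompatible pairs). -/
def comp : STy → STy → STy
  | ll, ll => ll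
  | ll, lllb => lllb
  | ll, lb => lllb
  | ll, llbl => llbl
  | ll, bl => llbl
  | lllb, _ => lllb
  | lb, _ => lb
  | llbl, _ => llbl
  | bl, _ => bl

end STy

/-- A synchronous algebra: a `STy`-typed set with a dependency relation and a
partial associative product defined exactly on compatible pairs, monotone with
respect to dependency, with units.  The partial product is modelled as an
`Option`-valued total product. -/
structure SyncAlg where
  A : Type
  ty : A → STy
  dep : A → A → Prop
  mul : A → A → Option A
  dep_refl : ∀ x, dep x x
  dep_symm : ∀ {x y}, dep x y → dep y x
  dep_eq : ∀ {x y}, dep x y → ty x = ty y → x = y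
  mul_defined : ∀ x y, (mul x y).isSome ↔ (ty x).compat (ty y)
  ty_mul : ∀ {x y z}, mul x y = some z → ty z = (ty x).comp (ty y)
  mul_assoc : ∀ x y z,
    (mul x y).bind (fun a => mul a z) = (mul y z).bind (fun b => mul x b)
  dep_mul_left : ∀ {x x' y z z'}, dep x x' →
    mul x y = some z → mul x' y = some z' → dep z z'
  dep_mul_right : ∀ {x x' y z z'}, dep x x' →
    mul y x = some z → mul y x' = some z' → dep z z'
  unit : STy → A
  ty_unit : ∀ τ, ty (unit τ) = τ
  unit_mul : ∀ {τ x z}, mul (unit τ) x = some z → dep z x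
  mul_unit : ∀ {τ x z}, mul x (unit τ) = some z → dep z x
  unit_lllb : mul (unit .ll) (unit .lb) = some (unit .lllb)
  unit_llbl : mul (unit .ll) (unit .bl) = some (unit .llbl)

namespace SyncAlg

/-- A closed subset of a synchronous algebra: saturated under dependency. -/
def Closed (S : SyncAlg) (C : Set S.A) : Prop :=
  ∀ {x y : S.A}, S.dep x y → (x ∈ C ↔ y ∈ C)

/-- Two-sided partial product `x·a·y`. -/
def mul3 (S : SyncAlg) (x a y : S.A) : Option S.A :=
  (S.mul x a).bind fun u => S.mul u y

/-- The syntactic congruence of a subset `C` of a synchronous algebra. -/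
def synCong (S : SyncAlg) (C : Set S.A) (a b : S.A) : Prop :=
  (∀ x y u v, S.mul3 x a y = some u → S.mul3 x b y = some v → (u ∈ C ↔ v ∈ C)) ∧
  (∀ x u v, S.mul x a = some u → S.mul x b = some v → (u ∈ C ↔ v ∈ C)) ∧
  (∀ y u v, S.mul a y = some u → S.mul b y = some v → (u ∈ C ↔ v ∈ C))

/-- Left residual `x⁻¹C` of a closed subset `C` by an element `x`. -/
def lres (S : SyncAlg) (x : S.A) (C : Set S.A) : Set S.A :=
  { y | ∃ y' u, S.synCong C y' y ∧ S.mul x y' = some u ∧ u ∈ C }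

/-- Right residual `C·x⁻¹` of a closed subset `C` by an element `x`. -/
def rres (S : SyncAlg) (x : S.A) (C : Set S.A) : Set S.A :=
  { y | ∃ y' u, S.synCong C y' y ∧ S.mul y' x = some u ∧ u ∈ C }

end SyncAlg

/-- Morphisms of synchronous algebras: preserve types, units, product and
dependency. -/
structure SyncHom (S T : SyncAlg) where
  toFun : S.A → T.A
  map_ty : ∀ x, T.ty (toFun x) = S.ty x
  map_unit : ∀ τ, toFun (S.unit τ) = T.unit τ
  map_mul : ∀ {x y z}, S.mul x y = some z →
    T.mul (toFun x) (toFun y) = some (toFun z)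
  map_dep : ∀ {x y}, S.dep x y → T.dep (toFun x) (toFun y)
/-- Synchronous words over an alphabet `α`, organized by their five types. -/
inductive SyncW (α : Type) : Type
  | wll : List (α × α) → SyncW α
  | wlllb : List (α × α) → List α → SyncW α
  | wlb : List α → SyncW α
  | wllbl : List (α × α) → List α → SyncW α
  | wbl : List α → SyncW α

namespace SyncW

variable {α : Type}

/-- The type of a synchronous word. -/
def ty : SyncW α → STy
  | wll _ => .ll | wlllb _ _ => .lllb | wlb _ => .lb | wllbl _ _ => .llbl | wbl _ => .bl

/-- Base identifications of the dependency relation on synchronous words. -/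
inductive dep0 : SyncW α → SyncW α → Prop
  | ll_lllb (w : List (α × α)) : dep0 (wll w) (wlllb w [])
  | ll_llbl (w : List (α × α)) : dep0 (wll w) (wllbl w [])
  | lb_lllb (s : List α) : dep0 (wlb s) (wlllb [] s)
  | bl_llbl (s : List α) : dep0 (wbl s) (wllbl [] s)

/-- The dependency relation: reflexive-symmetric closure of `dep0`. -/
def dep (x y : SyncW α) : Prop := x = y ∨ dep0 x y ∨ dep0 y x

/-- Concatenation of synchronous words (partial). -/
def mul : SyncW α → SyncW α → Option (SyncW α)
  | wll w, wll w' => some (wll (w ++ w'))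
  | wll w, wlllb w' s => some (wlllb (w ++ w') s)
  | wll w, wlb s => some (wlllb w s)
  | wll w, wllbl w' s => some (wllbl (w ++ w') s)
  | wll w, wbl s => some (wllbl w s)
  | wlllb w s, wlb s' => some (wlllb w (s ++ s'))
  | wlb s, wlb s' => some (wlb (s ++ s'))
  | wllbl w s, wbl s' => some (wllbl w (s ++ s'))
  | wbl s, wbl s' => some (wbl (s ++ s'))
  | _, _ => none

/-- Decoding into the pair of words represented. -/
def decode : SyncW α → List α × List α
  | wll w => (w.map Prod.fst, w.map Prod.snd)
  | wlllb w s => (w.map Prod.fst ++ s, w.map Prod.snd)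
  | wlb s => (s, [])
  | wllbl w s => (w.map Prod.fst, w.map Prod.snd ++ s)
  | wbl s => ([], s)

end SyncW

set_option maxHeartbeats 2000000 in
/-- The free synchronous algebra `Sync(α)` of synchronous words over `α`. -/
def freeSync (α : Type) : SyncAlg where
  A := SyncW α
  ty := SyncW.ty
  dep := SyncW.dep
  mul := SyncW.mul
  dep_refl x := Or.inl rfl
  dep_symm h := by
    rcases h with rfl | h | h
    · exact Or.inl rfl
    · exact Or.inr (Or.inr h)
    · exact Or.inr (Or.inl h)
  dep_eq := by
    rintro x y (rfl | h | h) hty <;> first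
      | rfl
      | (cases h <;> simp [SyncW.ty] at hty)
  mul_defined x y := by
    cases x <;> cases y <;>
      simp [SyncW.mul, SyncW.ty, STy.compat, STy.tgt, STy.src]
  ty_mul := by
    intro x y z h
    cases x <;> cases y <;>
      simp [SyncW.mul] at h <;> subst h <;> rfl
  mul_assoc x y z := by
    cases x <;> cases y <;> cases z <;>
      simp [SyncW.mul, List.append_assoc]
  dep_mul_left := by
    intro x x' y z z' h h1 h2
    rcases h with rfl | h | h
    · rw [h1] at h2; injection h2 with h2; rw [h2]; exact Or.inl rfl
    · cases h <;> cases y <;>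
        simp [SyncW.mul] at h1 h2 <;> subst h1 <;> subst h2 <;>
        first
          | exact Or.inl rfl
          | exact Or.inr (Or.inl (by constructor))
          | exact Or.inr (Or.inr (by constructor))
    · cases h <;> cases y <;>
        simp [SyncW.mul] at h1 h2 <;> subst h1 <;> subst h2 <;>
        first
          | exact Or.inl rfl
          | exact Or.inr (Or.inl (by constructor))
          | exact Or.inr (Or.inr (by constructor))
  dep_mul_right := by
    intro x x' y z z' h h1 h2
    rcases h with rfl | h | h
    · rw [h1] at h2; injection h2 with h2; rw [h2]; exact Or.inl rfl
    · cases h <;> cases y <;>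
        simp [SyncW.mul] at h1 h2 <;> subst h1 <;> subst h2 <;>
        first
          | exact Or.inl rfl
          | exact Or.inr (Or.inl (by constructor))
          | exact Or.inr (Or.inr (by constructor))
    · cases h <;> cases y <;>
        simp [SyncW.mul] at h1 h2 <;> subst h1 <;> subst h2 <;>
        first
          | exact Or.inl rfl
          | exact Or.inr (Or.inl (by constructor))
          | exact Or.inr (Or.inr (by constructor))
  unit := fun τ => match τ with
    | .ll => .wll []
    | .lllb => .wlllb [] []
    | .lb => .wlb []
    | .llbl => .wllbl [] []
    | .bl => .wbl []
  ty_unit τ := by cases τ <;> rfl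
  unit_mul := by
    intro τ x z h
    cases τ <;> cases x <;> simp [SyncW.mul] at h <;> subst h <;>
      first
        | exact Or.inl rfl
        | exact Or.inr (Or.inl (by constructor))
        | exact Or.inr (Or.inr (by constructor))
  mul_unit := by
    intro τ x z h
    cases τ <;> cases x <;> simp [SyncW.mul] at h <;> subst h <;>
      first
        | exact Or.inl rfl
        | exact Or.inr (Or.inl (by constructor))
        | exact Or.inr (Or.inr (by constructor))
  unit_lllb := rfl
  unit_llbl := rfl

/-- The closed subset of `Sync(α)` induced by a relation `R ⊆ α* × α*`. -/
def projS {α : Type} (R : Set (List α × List α)) : Set (SyncW α) :=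
  { x | x.decode ∈ R }

/-- `⟨φ, B, Acc⟩` recognizes the relation `R` when `Acc` is closed and
`proj R = φ⁻¹[Acc]`. -/
def RecognizesRel {α : Type} (B : SyncAlg) (φ : SyncHom (freeSync α) B)
    (Acc : Set B.A) (R : Set (List α × List α)) : Prop :=
  B.Closed Acc ∧ projS R = φ.toFun ⁻¹' Acc

/-! ### Auxiliary development: general lemmas about the syntactic congruence -/

namespace SyncAlg

variable {S : SyncAlg} {C : Set S.A}

theorem synCong_refl' (a : S.A) : S.synCong C a a := by
  refine ⟨?_, ?_, ?_⟩ <;> intro x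
  · intro y u v h1 h2
    rw [h1] at h2; obtain rfl := Option.some.inj h2; rfl
  · intro u v h1 h2
    rw [h1] at h2; obtain rfl := Option.some.inj h2; rfl
  · intro u v h1 h2
    rw [h1] at h2; obtain rfl := Option.some.inj h2; rfl

theorem synCong_symm' {a b : S.A} (h : S.synCong C a b) : S.synCong C b a :=
  ⟨fun x y u v h1 h2 => (h.1 x y v u h2 h1).symm,
   fun x u v h1 h2 => (h.2.1 x v u h2 h1).symm,
   fun y u v h1 h2 => (h.2.2 y v u h2 h1).symm⟩

theorem dep_synCong (hC : S.Closed C) {a b : S.A} (h : S.dep a b) : S.synCong C a b := by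
  refine ⟨?_, ?_, ?_⟩
  · intro x y u v h1 h2
    obtain ⟨s, hs, hsy⟩ := Option.bind_eq_some_iff.mp h1
    obtain ⟨t, ht, hty⟩ := Option.bind_eq_some_iff.mp h2
    exact hC (S.dep_mul_left (S.dep_mul_right h hs ht) hsy hty)
  · intro x u v h1 h2
    exact hC (S.dep_mul_right h h1 h2)
  · intro y u v h1 h2
    exact hC (S.dep_mul_left h h1 h2)

theorem compat_of_mul {x y z : S.A} (h : S.mul x y = some z) :
    (S.ty x).compat (S.ty y) :=
  (S.mul_defined x y).mp (by rw [h]; rfl)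

theorem mul_some_of_compat {x y : S.A} (h : (S.ty x).compat (S.ty y)) :
    ∃ z, S.mul x y = some z :=
  Option.isSome_iff_exists.mp ((S.mul_defined x y).mpr h)

theorem synCong_mem (hC : S.Closed C) {a b : S.A} (h : S.synCong C a b) :
    a ∈ C ↔ b ∈ C := by
  have hca : (S.ty (S.unit .ll)).compat (S.ty a) := Or.inr (by rw [S.ty_unit]; rfl)
  have hcb : (S.ty (S.unit .ll)).compat (S.ty b) := Or.inr (by rw [S.ty_unit]; rfl)
  obtain ⟨u, hu⟩ := mul_some_of_compat hca
  obtain ⟨v, hv⟩ := mul_some_of_compat hcb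
  exact (hC (S.unit_mul hu)).symm.trans ((h.2.1 _ u v hu hv).trans (hC (S.unit_mul hv)))

theorem assoc1 {x a b ab w : S.A} (hab : S.mul a b = some ab) (hw : S.mul x ab = some w) :
    ∃ xa, S.mul x a = some xa ∧ S.mul xa b = some w := by
  have h := S.mul_assoc x a b
  rw [hab, Option.bind_some, hw] at h
  exact Option.bind_eq_some_iff.mp h

theorem assoc2 {a b y ab w : S.A} (hab : S.mul a b = some ab) (hw : S.mul ab y = some w) :
    ∃ by', S.mul b y = some by' ∧ S.mul a by' = some w := by
  have h := S.mul_assoc a b y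
  rw [hab, Option.bind_some, hw] at h
  exact Option.bind_eq_some_iff.mp h.symm

/-- the `src` of a product type is the `src` of the first factor -/
theorem src_comp (σ τ : STy) : (σ.comp τ).src = σ.src := by
  cases σ <;> cases τ <;> rfl

theorem tgt_comp {σ τ : STy} (h : σ.compat τ) : (σ.comp τ).tgt = τ.tgt := by
  cases σ <;> cases τ <;> first | rfl | (rcases h with h | h <;> simp [STy.tgt, STy.src] at h)

theorem compat_congr {σ σ' τ τ' : STy} (h1 : σ = σ') (h2 : τ = τ') :
    σ.compat τ ↔ σ'.compat τ' := by rw [h1, h2]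

/-- Transitivity of the syntactic congruence, assuming the first two elements
have the same type. -/
theorem synCong_trans' {a b c : S.A} (h1 : S.synCong C a b) (h2 : S.synCong C b c)
    (hty : S.ty a = S.ty b) : S.synCong C a c := by
  refine ⟨?_, ?_, ?_⟩
  · intro x y u v hu hv
    obtain ⟨s, hs, hsy⟩ := Option.bind_eq_some_iff.mp hu
    have hcb : (S.ty x).compat (S.ty b) := hty ▸ compat_of_mul hs
    obtain ⟨t, ht⟩ := mul_some_of_compat hcb
    have htyst : S.ty s = S.ty t := by
      rw [S.ty_mul hs, S.ty_mul ht, hty]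
    have hcty : (S.ty t).compat (S.ty y) := htyst ▸ compat_of_mul hsy
    obtain ⟨w, hw⟩ := mul_some_of_compat hcty
    have hm : S.mul3 x b y = some w := Option.bind_eq_some_iff.mpr ⟨t, ht, hw⟩
    exact (h1.1 x y u w hu hm).trans (h2.1 x y w v hm hv)
  · intro x u v hu hv
    have hcb : (S.ty x).compat (S.ty b) := hty ▸ compat_of_mul hu
    obtain ⟨w, hw⟩ := mul_some_of_compat hcb
    exact (h1.2.1 x u w hu hw).trans (h2.2.1 x w v hw hv)
  · intro y u v hu hv
    have hcb : (S.ty b).compat (S.ty y) := hty ▸ compat_of_mul hu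
    obtain ⟨w, hw⟩ := mul_some_of_compat hcb
    exact (h1.2.2 y u w hu hw).trans (h2.2.2 y w v hw hv)

/-- Right stability of the syntactic congruence. -/
theorem synCong_mul_right {a a' b z z' : S.A} (h : S.synCong C a a')
    (hz : S.mul a b = some z) (hz' : S.mul a' b = some z') : S.synCong C z z' := by
  refine ⟨?_, ?_, ?_⟩
  · intro x y u v hu hv
    obtain ⟨w1, hw1, hw1y⟩ := Option.bind_eq_some_iff.mp hu
    obtain ⟨xa, hxa, hxab⟩ := assoc1 hz hw1
    obtain ⟨by1, hby1, hu'⟩ := assoc2 hxab hw1y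
    obtain ⟨w2, hw2, hw2y⟩ := Option.bind_eq_some_iff.mp hv
    obtain ⟨xa', hxa', hxab'⟩ := assoc1 hz' hw2
    obtain ⟨by2, hby2, hv'⟩ := assoc2 hxab' hw2y
    rw [hby1] at hby2
    obtain rfl := Option.some.inj hby2
    exact h.1 x by1 u v (Option.bind_eq_some_iff.mpr ⟨xa, hxa, hu'⟩)
      (Option.bind_eq_some_iff.mpr ⟨xa', hxa', hv'⟩)
  · intro x u v hu hv
    obtain ⟨xa, hxa, hxab⟩ := assoc1 hz hu
    obtain ⟨xa', hxa', hxab'⟩ := assoc1 hz' hv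
    exact h.1 x b u v (Option.bind_eq_some_iff.mpr ⟨xa, hxa, hxab⟩)
      (Option.bind_eq_some_iff.mpr ⟨xa', hxa', hxab'⟩)
  · intro y u v hu hv
    obtain ⟨by1, hby1, hu'⟩ := assoc2 hz hu
    obtain ⟨by2, hby2, hv'⟩ := assoc2 hz' hv
    rw [hby1] at hby2
    obtain rfl := Option.some.inj hby2
    exact h.2.2 by1 u v hu' hv'

/-- Left stability of the syntactic congruence. -/
theorem synCong_mul_left {a b b' z z' : S.A} (h : S.synCong C b b')
    (hz : S.mul a b = some z) (hz' : S.mul a b' = some z') : S.synCong C z z' := by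
  refine ⟨?_, ?_, ?_⟩
  · intro x y u v hu hv
    obtain ⟨w1, hw1, hw1y⟩ := Option.bind_eq_some_iff.mp hu
    obtain ⟨xa, hxa, hxab⟩ := assoc1 hz hw1
    obtain ⟨w2, hw2, hw2y⟩ := Option.bind_eq_some_iff.mp hv
    obtain ⟨xa', hxa', hxab'⟩ := assoc1 hz' hw2
    rw [hxa] at hxa'
    obtain rfl := Option.some.inj hxa'
    exact h.1 xa y u v (Option.bind_eq_some_iff.mpr ⟨w1, hxab, hw1y⟩)
      (Option.bind_eq_some_iff.mpr ⟨w2, hxab', hw2y⟩)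
  · intro x u v hu hv
    obtain ⟨xa, hxa, hxab⟩ := assoc1 hz hu
    obtain ⟨xa', hxa', hxab'⟩ := assoc1 hz' hv
    rw [hxa] at hxa'
    obtain rfl := Option.some.inj hxa'
    exact h.2.1 xa u v hxab hxab'
  · intro y u v hu hv
    exact h.1 a y u v (Option.bind_eq_some_iff.mpr ⟨z, hz, hu⟩)
      (Option.bind_eq_some_iff.mpr ⟨z', hz', hv⟩)

end SyncAlg

/-! ### The syntactic algebra of a relation -/

section Syntactic

variable (α : Type) (R : Set (List α × List α))

theorem dep0_decode {x y : SyncW α} (h : SyncW.dep0 x y) : x.decode = y.decode := by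
  cases h <;> simp [SyncW.decode]

theorem projS_closed : (freeSync α).Closed (projS R) := by
  intro x y h
  rcases h with rfl | h | h
  · exact Iff.rfl
  · show x.decode ∈ R ↔ y.decode ∈ R
    rw [dep0_decode α h]
  · show x.decode ∈ R ↔ y.decode ∈ R
    rw [dep0_decode α h]

theorem fs_map_some {γ β : Type} (f : SyncW γ → β) (z : (freeSync γ).A) :
    Option.map f (some z : Option (freeSync γ).A) = some (f z) := rfl

theorem fs_map_none {γ β : Type} (f : SyncW γ → β) :
    Option.map f (none : Option (freeSync γ).A) = none := rfl

theorem fs_isSome_map {γ β : Type} (f : SyncW γ → β) (x : Option (freeSync γ).A) :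
    (Option.map f x).isSome = x.isSome := by cases x <;> rfl

/-- The setoid on synchronous words induced by the syntactic congruence
(together with type equality). -/
def SynSetoid : Setoid (SyncW α) where
  r a b := (freeSync α).ty a = (freeSync α).ty b ∧ (freeSync α).synCong (projS R) a b
  iseqv := by
    constructor
    · intro a; exact ⟨rfl, SyncAlg.synCong_refl' (S := freeSync α) a⟩
    · intro a b h; exact ⟨h.1.symm, SyncAlg.synCong_symm' h.2⟩
    · intro a b c h1 h2; exact ⟨h1.1.trans h2.1, SyncAlg.synCong_trans' h1.2 h2.2 h1.1⟩

/-- Carrier of the syntactic algebra. -/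
abbrev SynQ := Quotient (SynSetoid α R)

/-- Type function on the syntactic algebra. -/
def Qty : SynQ α R → STy :=
  Quotient.lift ((freeSync α).ty) fun _ _ h => h.1

/-- Dependency relation on the syntactic algebra. -/
def Qdep : SynQ α R → SynQ α R → Prop :=
  Quotient.lift₂ ((freeSync α).synCong (projS R)) <| by
    intro a b a' b' ha hb
    obtain ⟨hat, has⟩ := ha
    obtain ⟨hbt, hbs⟩ := hb
    have key : ∀ {x x' y y' : SyncW α},
        (freeSync α).ty x = (freeSync α).ty x' → (freeSync α).synCong (projS R) x x' →
        (freeSync α).ty y = (freeSync α).ty y' → (freeSync α).synCong (projS R) y y' →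
        (freeSync α).synCong (projS R) x y →
        (freeSync α).synCong (projS R) x' y' := by
      intro x x' y y' htx hx hty hy h
      have h1 : (freeSync α).synCong (projS R) x' y :=
        SyncAlg.synCong_trans' (SyncAlg.synCong_symm' hx) h htx.symm
      exact SyncAlg.synCong_symm'
        (SyncAlg.synCong_trans' (SyncAlg.synCong_symm' hy) (SyncAlg.synCong_symm' h1) hty.symm)
    exact propext ⟨fun h => key hat has hbt hbs h,
      fun h => key hat.symm (SyncAlg.synCong_symm' has) hbt.symm (SyncAlg.synCong_symm' hbs) h⟩

/-- Product on the syntactic algebra. -/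
def Qmul : SynQ α R → SynQ α R → Option (SynQ α R) :=
  Quotient.lift₂ (fun a b => ((freeSync α).mul a b).map (Quotient.mk (SynSetoid α R))) <| by
    intro a b a' b' ha hb
    obtain ⟨hat, has⟩ := ha
    obtain ⟨hbt, hbs⟩ := hb
    show ((freeSync α).mul a b).map (Quotient.mk (SynSetoid α R)) =
      ((freeSync α).mul a' b').map (Quotient.mk (SynSetoid α R))
    cases hab : (freeSync α).mul a b with
    | none =>
      have hc : ¬ ((freeSync α).ty a).compat ((freeSync α).ty b) := by
        intro hc
        obtain ⟨z, hz⟩ := SyncAlg.mul_some_of_compat (S := freeSync α) hc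
        rw [hab] at hz
        cases hz
      have h2 : (freeSync α).mul a' b' = none := by
        cases h2 : (freeSync α).mul a' b' with
        | none => rfl
        | some z =>
          have := SyncAlg.compat_of_mul (S := freeSync α) h2
          rw [← hat, ← hbt] at this
          exact absurd this hc
      rw [h2]
    | some z =>
      have hc : ((freeSync α).ty a).compat ((freeSync α).ty b) :=
        SyncAlg.compat_of_mul (S := freeSync α) hab
      obtain ⟨z1, hz1⟩ : ∃ z1, (freeSync α).mul a' b = some z1 :=
        SyncAlg.mul_some_of_compat (S := freeSync α) (by rw [← hat]; exact hc)
      obtain ⟨z', hz'⟩ : ∃ z', (freeSync α).mul a' b' = some z' :=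
        SyncAlg.mul_some_of_compat (S := freeSync α) (by rw [← hat, ← hbt]; exact hc)
      have s1 : (freeSync α).synCong (projS R) z z1 :=
        SyncAlg.synCong_mul_right has hab hz1
      have s2 : (freeSync α).synCong (projS R) z1 z' :=
        SyncAlg.synCong_mul_left hbs hz1 hz'
      have t1 : (freeSync α).ty z = (freeSync α).ty z1 := by
        rw [(freeSync α).ty_mul hab, (freeSync α).ty_mul hz1, hat]
      have t2 : (freeSync α).ty z = (freeSync α).ty z' := by
        rw [(freeSync α).ty_mul hab, (freeSync α).ty_mul hz', hat, hbt]
      have hzz : (Quotient.mk (SynSetoid α R) z) = Quotient.mk (SynSetoid α R) z' :=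
        Quotient.sound ⟨t2, SyncAlg.synCong_trans' s1 s2 t1⟩
      rw [hz', fs_map_some, fs_map_some, hzz]

variable {α R}

theorem Qmul_mk (a b : SyncW α) :
    Qmul α R (Quotient.mk (SynSetoid α R) a) (Quotient.mk (SynSetoid α R) b) =
      ((freeSync α).mul a b).map (Quotient.mk (SynSetoid α R)) := rfl

theorem Qty_mk (a : SyncW α) :
    Qty α R (Quotient.mk (SynSetoid α R) a) = (freeSync α).ty a := rfl

theorem Qdep_mk (a b : SyncW α) :
    Qdep α R (Quotient.mk (SynSetoid α R) a) (Quotient.mk (SynSetoid α R) b) =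
      (freeSync α).synCong (projS R) a b := rfl

variable (α R)

/-- The syntactic algebra of `R`. -/
def SynAR : SyncAlg where
  A := SynQ α R
  ty := Qty α R
  dep := Qdep α R
  mul := Qmul α R
  dep_refl := by
    intro x
    induction x using Quotient.ind with | _ a =>
    rw [Qdep_mk]
    exact SyncAlg.synCong_refl' (S := freeSync α) a
  dep_symm := by
    intro x y
    induction x using Quotient.ind with | _ a =>
    induction y using Quotient.ind with | _ b =>
    rw [Qdep_mk, Qdep_mk]
    exact fun h => SyncAlg.synCong_symm' h
  dep_eq := by
    intro x y
    induction x using Quotient.ind with | _ a =>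
    induction y using Quotient.ind with | _ b =>
    rw [Qdep_mk, Qty_mk, Qty_mk]
    intro h hty
    exact Quotient.sound ⟨hty, h⟩
  mul_defined := by
    intro x y
    induction x using Quotient.ind with | _ a =>
    induction y using Quotient.ind with | _ b =>
    rw [Qmul_mk, Qty_mk, Qty_mk,
      fs_isSome_map]
    exact (freeSync α).mul_defined a b
  ty_mul := by
    intro x y z
    induction x using Quotient.ind with | _ a =>
    induction y using Quotient.ind with | _ b =>
    induction z using Quotient.ind with | _ c =>
    intro h
    rw [Qmul_mk] at h
    cases hab : (freeSync α).mul a b with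
    | none => rw [hab] at h; cases h
    | some w =>
      rw [hab, fs_map_some] at h
      have hq := Option.some.inj h
      rw [← hq, Qty_mk]
      exact (freeSync α).ty_mul hab
  mul_assoc := by
    intro x y z
    induction x using Quotient.ind with | _ a =>
    induction y using Quotient.ind with | _ b =>
    induction z using Quotient.ind with | _ c =>
    have h := (freeSync α).mul_assoc a b c
    show (Qmul α R (Quotient.mk (SynSetoid α R) a) (Quotient.mk (SynSetoid α R) b)).bind
        (fun q => Qmul α R q (Quotient.mk (SynSetoid α R) c)) =
      (Qmul α R (Quotient.mk (SynSetoid α R) b) (Quotient.mk (SynSetoid α R) c)).bind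
        (fun q => Qmul α R (Quotient.mk (SynSetoid α R) a) q)
    rw [Qmul_mk, Qmul_mk]
    cases hab : (freeSync α).mul a b <;> cases hbc : (freeSync α).mul b c <;>
      rw [hab, hbc] at h <;>
      simp only [fs_map_none, fs_map_some, Option.bind_none,
        Option.bind_some] at h ⊢
    · erw [Qmul_mk, ← h, fs_map_none]
    · erw [Qmul_mk, h, fs_map_none]
    · erw [Qmul_mk, Qmul_mk, h]
  dep_mul_left := by
    intro x x' y z z' h h1 h2
    induction x using Quotient.ind with | _ a =>
    induction x' using Quotient.ind with | _ a' =>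
    induction y using Quotient.ind with | _ b =>
    induction z using Quotient.ind with | _ w =>
    induction z' using Quotient.ind with | _ w' =>
    rw [Qdep_mk] at h
    rw [Qmul_mk] at h1 h2
    cases hab : (freeSync α).mul a b with
    | none => rw [hab] at h1; cases h1
    | some u =>
      cases hab' : (freeSync α).mul a' b with
      | none => rw [hab'] at h2; cases h2
      | some u' =>
        rw [hab, fs_map_some] at h1
        rw [hab', fs_map_some] at h2
        have hq1 := Option.some.inj h1
        have hq2 := Option.some.inj h2
        erw [← hq1, ← hq2, Qdep_mk]
        exact SyncAlg.synCong_mul_right h hab hab'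
  dep_mul_right := by
    intro x x' y z z' h h1 h2
    induction x using Quotient.ind with | _ a =>
    induction x' using Quotient.ind with | _ a' =>
    induction y using Quotient.ind with | _ b =>
    induction z using Quotient.ind with | _ w =>
    induction z' using Quotient.ind with | _ w' =>
    rw [Qdep_mk] at h
    rw [Qmul_mk] at h1 h2
    cases hab : (freeSync α).mul b a with
    | none => rw [hab] at h1; cases h1
    | some u =>
      cases hab' : (freeSync α).mul b a' with
      | none => rw [hab'] at h2; cases h2
      | some u' =>
        rw [hab, fs_map_some] at h1
        rw [hab', fs_map_some] at h2
        have hq1 := Option.some.inj h1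
        have hq2 := Option.some.inj h2
        erw [← hq1, ← hq2, Qdep_mk]
        exact SyncAlg.synCong_mul_left h hab hab'
  unit := fun τ => Quotient.mk (SynSetoid α R) ((freeSync α).unit τ)
  ty_unit := by intro τ; cases τ <;> rfl
  unit_mul := by
    intro τ x z h
    induction x using Quotient.ind with | _ a =>
    induction z using Quotient.ind with | _ w =>
    have h' : Qmul α R (Quotient.mk (SynSetoid α R) ((freeSync α).unit τ))
        (Quotient.mk (SynSetoid α R) a) = some (Quotient.mk (SynSetoid α R) w) := h
    erw [Qmul_mk] at h'
    show Qdep α R (Quotient.mk (SynSetoid α R) w) (Quotient.mk (SynSetoid α R) a)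
    cases hm : (freeSync α).mul ((freeSync α).unit τ) a with
    | none => rw [hm] at h'; cases h'
    | some u =>
      rw [hm, fs_map_some] at h'
      have hq := Option.some.inj h'
      erw [← hq, Qdep_mk]
      exact SyncAlg.dep_synCong (projS_closed α R) ((freeSync α).unit_mul hm)
  mul_unit := by
    intro τ x z h
    induction x using Quotient.ind with | _ a =>
    induction z using Quotient.ind with | _ w =>
    have h' : Qmul α R (Quotient.mk (SynSetoid α R) a)
        (Quotient.mk (SynSetoid α R) ((freeSync α).unit τ)) = some (Quotient.mk (SynSetoid α R) w) := h
    erw [Qmul_mk] at h'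
    show Qdep α R (Quotient.mk (SynSetoid α R) w) (Quotient.mk (SynSetoid α R) a)
    cases hm : (freeSync α).mul a ((freeSync α).unit τ) with
    | none => rw [hm] at h'; cases h'
    | some u =>
      rw [hm, fs_map_some] at h'
      have hq := Option.some.inj h'
      erw [← hq, Qdep_mk]
      exact SyncAlg.dep_synCong (projS_closed α R) ((freeSync α).mul_unit hm)
  unit_lllb := rfl
  unit_llbl := rfl

/-- The syntactic morphism. -/
def etaR : SyncHom (freeSync α) (SynAR α R) where
  toFun := Quotient.mk (SynSetoid α R)
  map_ty := fun _ => rfl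
  map_unit := fun _ => rfl
  map_mul := by
    intro x y z h
    show Qmul α R (Quotient.mk (SynSetoid α R) x) (Quotient.mk (SynSetoid α R) y) =
      some (Quotient.mk (SynSetoid α R) z)
    erw [Qmul_mk, h, fs_map_some]
  map_dep := by
    intro x y h
    show Qdep α R (Quotient.mk (SynSetoid α R) x) (Quotient.mk (SynSetoid α R) y)
    erw [Qdep_mk]
    exact SyncAlg.dep_synCong (projS_closed α R) h

/-- The accepting set of the syntactic algebra. -/
def AccR : Set (SynQ α R) :=
  { q | ∃ a, a ∈ projS R ∧ Quotient.mk (SynSetoid α R) a = q }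

variable {α R}

theorem mem_AccR (a : SyncW α) :
    Quotient.mk (SynSetoid α R) a ∈ AccR α R ↔ a ∈ projS R := by
  constructor
  · rintro ⟨b, hb, he⟩
    exact (SyncAlg.synCong_mem (projS_closed α R) (Quotient.exact he).2).mp hb
  · intro h
    exact ⟨a, h, rfl⟩

variable (α R)

theorem AccR_closed : (SynAR α R).Closed (AccR α R) := by
  intro x y
  induction x using Quotient.ind with | _ a =>
  induction y using Quotient.ind with | _ b =>
  intro h
  erw [mem_AccR, mem_AccR]
  exact SyncAlg.synCong_mem (projS_closed α R) h

theorem etaR_recognizes : RecognizesRel (SynAR α R) (etaR α R) (AccR α R) R := by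
  refine ⟨AccR_closed α R, ?_⟩
  ext x
  exact (mem_AccR x).symm

end Syntactic

section Factor

variable {α : Type} {R : Set (List α × List α)}

/-- Elements with dependent images have syntactically congruent preimages. -/
theorem kerdep {B : SyncAlg} {φ : SyncHom (freeSync α) B} {AccB : Set B.A}
    (hcl : B.Closed AccB) (heq : projS R = φ.toFun ⁻¹' AccB)
    {u v : SyncW α} (h : B.dep (φ.toFun u) (φ.toFun v)) :
    (freeSync α).synCong (projS R) u v := by
  have memC : ∀ w : SyncW α, w ∈ projS R ↔ φ.toFun w ∈ AccB := by
    intro w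
    rw [heq]
    exact Iff.rfl
  refine ⟨?_, ?_, ?_⟩
  · intro x y w w' hw hw'
    obtain ⟨s, hs, hsy⟩ := Option.bind_eq_some_iff.mp hw
    obtain ⟨t, ht, hty⟩ := Option.bind_eq_some_iff.mp hw'
    have hst : B.dep (φ.toFun s) (φ.toFun t) :=
      B.dep_mul_right h (φ.map_mul hs) (φ.map_mul ht)
    have hww : B.dep (φ.toFun w) (φ.toFun w') :=
      B.dep_mul_left hst (φ.map_mul hsy) (φ.map_mul hty)
    erw [memC w, memC w']
    exact hcl hww
  · intro x w w' hw hw'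
    have hww : B.dep (φ.toFun w) (φ.toFun w') :=
      B.dep_mul_right h (φ.map_mul hw) (φ.map_mul hw')
    erw [memC w, memC w']
    exact hcl hww
  · intro y w w' hw hw'
    have hww : B.dep (φ.toFun w) (φ.toFun w') :=
      B.dep_mul_left h (φ.map_mul hw) (φ.map_mul hw')
    erw [memC w, memC w']
    exact hcl hww

/-- The factorization property of the syntactic morphism. -/
theorem factorSyn (B : SyncAlg) (φ : SyncHom (freeSync α) B)
    (hs : Function.Surjective φ.toFun)
    (hrec : ∃ Acc : Set B.A, RecognizesRel B φ Acc R) :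
    ∃ ψ : SyncHom B (SynAR α R),
      Function.Surjective ψ.toFun ∧ ∀ u, ψ.toFun (φ.toFun u) = (etaR α R).toFun u := by
  obtain ⟨AccB, hcl, heq⟩ := hrec
  -- a choice of preimages
  have hgs : ∀ b : B.A, ∃ u : SyncW α, φ.toFun u = b := hs
  classical
  set g : B.A → SyncW α := fun b => Classical.choose (hgs b) with hgdef
  have hg : ∀ b, φ.toFun (g b) = b := fun b => Classical.choose_spec (hgs b)
  have ker : ∀ u v : SyncW α, φ.toFun u = φ.toFun v →
      Quotient.mk (SynSetoid α R) u = Quotient.mk (SynSetoid α R) v := by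
    intro u v h
    refine Quotient.sound ⟨?_, ?_⟩
    · rw [← φ.map_ty u, ← φ.map_ty v, h]
    · exact kerdep hcl heq (h ▸ B.dep_refl (φ.toFun u))
  have hgφ : ∀ u : SyncW α,
      Quotient.mk (SynSetoid α R) (g (φ.toFun u)) = Quotient.mk (SynSetoid α R) u :=
    fun u => ker _ _ (hg _)
  refine ⟨{ toFun := fun b => Quotient.mk (SynSetoid α R) (g b)
            map_ty := ?_
            map_unit := ?_
            map_mul := ?_
            map_dep := ?_ }, ?_, ?_⟩
  · intro b
    show Qty α R (Quotient.mk (SynSetoid α R) (g b)) = B.ty b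
    rw [Qty_mk, ← φ.map_ty (g b), hg]
  · intro τ
    show Quotient.mk (SynSetoid α R) (g (B.unit τ)) =
      Quotient.mk (SynSetoid α R) ((freeSync α).unit τ)
    rw [← φ.map_unit τ]
    exact hgφ _
  · intro b c d h
    have hcb : ((freeSync α).ty (g b)).compat ((freeSync α).ty (g c)) := by
      rw [← φ.map_ty (g b), ← φ.map_ty (g c), hg, hg]
      exact (B.mul_defined b c).mp (by rw [h]; rfl)
    obtain ⟨s, hsval⟩ := SyncAlg.mul_some_of_compat (S := freeSync α) hcb
    have hBm := φ.map_mul hsval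
    rw [hg, hg, h] at hBm
    have hd : d = φ.toFun s := Option.some.inj hBm
    show Qmul α R (Quotient.mk (SynSetoid α R) (g b)) (Quotient.mk (SynSetoid α R) (g c)) =
      some (Quotient.mk (SynSetoid α R) (g d))
    rw [Qmul_mk, hsval, fs_map_some]
    congr 1
    rw [hd]
    exact (hgφ s).symm
  · intro b c h
    show Qdep α R (Quotient.mk (SynSetoid α R) (g b)) (Quotient.mk (SynSetoid α R) (g c))
    rw [Qdep_mk]
    refine kerdep hcl heq ?_
    rw [hg, hg]
    exact h
  · intro q
    induction q using Quotient.ind with | _ u =>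
    exact ⟨φ.toFun u, hgφ u⟩
  · intro u
    exact hgφ u

end Factor
/-- **Syntactic morphism theorem.** For every relation
`R ⊆ α* × α*` there is a surjective synchronous algebra morphism
`η : Sync(α) ↠ A_R` recognizing `R` such that every surjective morphism
recognizing `R` factors through it via a surjective morphism; moreover `A_R`
is unique up to isomorphism (any other algebra with the same universal property
is isomorphic to it). -/
theorem syntactic_morphism_theorem (α : Type) (R : Set (List α × List α)) :
    ∃ (AR : SyncAlg) (η : SyncHom (freeSync α) AR),
      Function.Surjective η.toFun ∧
      (∃ Acc : Set AR.A, RecognizesRel AR η Acc R) ∧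
      (∀ (B : SyncAlg) (φ : SyncHom (freeSync α) B),
        Function.Surjective φ.toFun → (∃ Acc : Set B.A, RecognizesRel B φ Acc R) →
        ∃ ψ : SyncHom B AR,
          Function.Surjective ψ.toFun ∧ ∀ u, ψ.toFun (φ.toFun u) = η.toFun u) ∧
      (∀ (A' : SyncAlg) (η' : SyncHom (freeSync α) A'),
        Function.Surjective η'.toFun →
        (∃ Acc : Set A'.A, RecognizesRel A' η' Acc R) →
        (∀ (B : SyncAlg) (φ : SyncHom (freeSync α) B),
          Function.Surjective φ.toFun → (∃ Acc : Set B.A, RecognizesRel B φ Acc R) →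
          ∃ ψ : SyncHom B A',
            Function.Surjective ψ.toFun ∧ ∀ u, ψ.toFun (φ.toFun u) = η'.toFun u) →
        ∃ (f : SyncHom AR A') (g : SyncHom A' AR),
          (∀ x, g.toFun (f.toFun x) = x) ∧ (∀ x, f.toFun (g.toFun x) = x)) := by
  refine ⟨SynAR α R, etaR α R, ?_, ⟨AccR α R, etaR_recognizes α R⟩, factorSyn, ?_⟩
  · intro q
    induction q using Quotient.ind with | _ u =>
    exact ⟨u, rfl⟩
  · intro A' η' hs' hrec' huniv'
    have hsη : Function.Surjective (etaR α R).toFun := by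
      intro q
      induction q using Quotient.ind with | _ u =>
      exact ⟨u, rfl⟩
    obtain ⟨f, hfs, hf⟩ := huniv' (SynAR α R) (etaR α R) hsη ⟨AccR α R, etaR_recognizes α R⟩
    obtain ⟨g, hgs, hg⟩ := factorSyn A' η' hs' hrec'
    refine ⟨f, g, ?_, ?_⟩
    · intro x
      obtain ⟨u, rfl⟩ := hsη x
      rw [hf, hg]
    · intro x
      obtain ⟨u, rfl⟩ := hs' x
      rw [hg, hf]
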